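/- arXiv:math/0610218 — 8 statements merged into one kernel-verified Lean document; each statement's English description precedes it below -/
import Mathlib

section
/- For 0 < α < 1, the function ρ_α(y) = (sin(πα)/π) · y^{α-1} / (y^{2α} + 2y^α cos(πα) + 1) on (0,∞) is a probability density, i.e., ∫₀^∞ ρ_α(y) dy = 1. -/
open Real MeasureTheory Set Filter

theorem stmt_0 (α : ℝ) (hα0 : 0 < α) (hα1 : α < 1) :
    ∫ y in Ioi (0:ℝ),
      (Real.sin (π * α) / π) * y ^ (α - 1) /
        (y ^ (2 * α) + 2 * y ^ α * Real.cos (π * α) + 1) = 1 := by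
  have hπ := Real.pi_pos
  set c := Real.cos (π * α) with hc
  set s := Real.sin (π * α) with hsdef
  have hs : 0 < s := Real.sin_pos_of_pos_of_lt_pi (by positivity) (by nlinarith)
  have hcs : c ^ 2 + s ^ 2 = 1 := by
    rw [hc, hsdef]; exact Real.cos_sq_add_sin_sq _
  -- denominator positivity helper
  have hden : ∀ t : ℝ, 0 < t ^ 2 + 2 * t * c + 1 := by
    intro t
    have : t ^ 2 + 2 * t * c + 1 = (t + c) ^ 2 + s ^ 2 := by ring_nf; nlinarith
    rw [this]; positivity
  -- the key one-dimensional integral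
  have hI : ∫ t in Ioi (0:ℝ), 1 / (t ^ 2 + 2 * t * c + 1) = π * α / s := by
    have hderiv : ∀ x ∈ Ioi (0:ℝ),
        HasDerivAt (fun t => (1 / s) * Real.arctan ((t + c) / s))
          (1 / (x ^ 2 + 2 * x * c + 1)) x := by
      intro x _
      have h1 : HasDerivAt (fun t : ℝ => (t + c) / s) (1 / s) x := by
        simpa using ((hasDerivAt_id x).add_const c).div_const s
      have h2 := (Real.hasDerivAt_arctan ((x + c) / s)).comp x h1
      have h3 := h2.const_mul (1 / s)
      refine h3.congr_deriv ?_
      have h4 : x ^ 2 + 2 * x * c + 1 = (x + c) ^ 2 + s ^ 2 := by nlinarith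
      rw [h4]
      field_simp
      ring
    have hnonneg : ∀ x ∈ Ioi (0:ℝ), 0 ≤ 1 / (x ^ 2 + 2 * x * c + 1) := by
      intro x _; exact (one_div_pos.mpr (hden x)).le
    have hcont : ContinuousWithinAt (fun t => (1 / s) * Real.arctan ((t + c) / s))
        (Ici (0:ℝ)) 0 :=
      (continuous_const.mul (Real.continuous_arctan.comp
        ((continuous_id.add continuous_const).div_const s))).continuousWithinAt
    have htend : Tendsto (fun t => (1 / s) * Real.arctan ((t + c) / s)) atTop
        (nhds ((1 / s) * (π / 2))) := by
      have h1 : Tendsto (fun t : ℝ => (t + c) / s) atTop atTop :=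
        (tendsto_atTop_add_const_right _ c tendsto_id).atTop_div_const hs
      exact (tendsto_nhds_of_tendsto_nhdsWithin
        (Real.tendsto_arctan_atTop.comp h1)).const_mul _
    have := integral_Ioi_of_hasDerivAt_of_nonneg hcont hderiv hnonneg htend
    rw [this]
    have harc : Real.arctan ((0 + c) / s) = π / 2 - π * α := by
      have h1 : (0 + c) / s = Real.tan (π / 2 - π * α) := by
        rw [Real.tan_pi_div_two_sub, Real.tan_eq_sin_div_cos, inv_div, hc, hsdef, zero_add]
      rw [h1, Real.arctan_tan (by nlinarith) (by nlinarith)]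
    rw [harc]
    field_simp
    ring
  -- rewrite the integrand and substitute t = y ^ α
  set g : ℝ → ℝ := fun t => 1 / (t ^ 2 + 2 * t * c + 1) with hg
  have key : ∫ y in Ioi (0:ℝ),
      (s / π) * y ^ (α - 1) / (y ^ (2 * α) + 2 * y ^ α * c + 1)
      = (s / (π * α)) * ∫ y in Ioi (0:ℝ),
          (|α| * y ^ (α - 1)) • g (y ^ α) := by
    rw [← integral_const_mul]
    refine setIntegral_congr_fun measurableSet_Ioi ?_
    intro y hy
    have hy0 : (0:ℝ) < y := hy
    have h2α : y ^ (2 * α) = (y ^ α) ^ 2 := by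
      rw [mul_comm, Real.rpow_mul hy0.le]
      norm_num [Real.rpow_two]
    simp only [smul_eq_mul, hg, h2α, abs_of_pos hα0]
    have hd := hden (y ^ α)
    field_simp
  rw [key, integral_comp_rpow_Ioi g hα0.ne', hg]
  simp only []
  rw [hI]
  field_simp
end

section
/- For 0 < α < 1, the function F(x) = 1 − (1/(πα)) · arccot( cot(πα) + x^α / sin(πα) ) defined on (0,∞) satisfies F'(x) = (sin(πα)/π) · x^{α-1} / (x^{2α} + 2x^α cos(πα) + 1) for all x > 0, and F(x) → 0 as x → 0⁺ and F(x) → 1 as x → ∞. Hence F is the cdf associated to the density ρ_α. -/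
open Real MeasureTheory Set Filter Topology

/-- Inverse cotangent with values in `(0, π)`. -/
noncomputable def arccot (x : ℝ) : ℝ := π / 2 - Real.arctan x

theorem stmt_1 (α : ℝ) (hα0 : 0 < α) (hα1 : α < 1)
    (F : ℝ → ℝ)
    (hF : ∀ x, F x = 1 - (1 / (π * α)) *
        arccot (Real.cot (π * α) + x ^ α / Real.sin (π * α))) :
    (∀ x > (0:ℝ), HasDerivAt F
        ((Real.sin (π * α) / π) * x ^ (α - 1) /
          (x ^ (2 * α) + 2 * x ^ α * Real.cos (π * α) + 1)) x)
    ∧ Tendsto F (𝓝[>] (0:ℝ)) (𝓝 0)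
    ∧ Tendsto F atTop (𝓝 1) := by
  have hπ := Real.pi_pos
  set s := Real.sin (π * α) with hs_def
  set c := Real.cos (π * α) with hc_def
  have hπα0 : 0 < π * α := by positivity
  have hπα1 : π * α < π := by nlinarith
  have hs : 0 < s := Real.sin_pos_of_pos_of_lt_pi hπα0 hπα1
  have hsc : s ^ 2 + c ^ 2 = 1 := Real.sin_sq_add_cos_sq _
  have hFeq : F = fun x => 1 - (1 / (π * α)) *
      (π / 2 - Real.arctan (Real.cot (π * α) + x ^ α / s)) := by
    funext x; rw [hF x]; rfl
  refine ⟨?_, ?_, ?_⟩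
  · intro x hx
    have hrpow : HasDerivAt (fun x : ℝ => x ^ α) (α * x ^ (α - 1)) x :=
      Real.hasDerivAt_rpow_const (Or.inl hx.ne')
    have hg : HasDerivAt (fun x : ℝ => Real.cot (π * α) + x ^ α / s)
        (α * x ^ (α - 1) / s) x := (hrpow.div_const s).const_add _
    have harctan := (Real.hasDerivAt_arctan (Real.cot (π * α) + x ^ α / s)).comp x hg
    have hFd := ((harctan.const_sub (π / 2)).const_mul (1 / (π * α))).const_sub 1
    rw [hFeq]
    convert hFd using 1
    · rfl
    · rfl
    · rfl
    have hy2 : x ^ (2 * α) = (x ^ α) ^ 2 := by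
      rw [two_mul, Real.rpow_add hx]; ring
    have hcot : Real.cot (π * α) = c / s := Real.cot_eq_cos_div_sin _
    have hD : 0 < x ^ (2 * α) + 2 * x ^ α * c + 1 := by
      rw [hy2]; nlinarith [sq_nonneg (x ^ α + c), hs]
    rw [hcot, hy2] at *
    set y := x ^ α
    have h1 : 1 + (c / s + y / s) ^ 2 = (y ^ 2 + 2 * y * c + 1) / s ^ 2 := by
      field_simp
      ring_nf
      nlinarith [hsc]
    rw [h1]
    have hD' : y ^ 2 + 2 * y * c + 1 ≠ 0 := by
      rw [hy2] at hD; exact hD.ne'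
    field_simp
  · have hy0 : Tendsto (fun x : ℝ => x ^ α) (𝓝[>] (0:ℝ)) (𝓝 0) := by
      have : Tendsto (fun x : ℝ => x ^ α) (𝓝 (0:ℝ)) (𝓝 ((0:ℝ) ^ α)) :=
        (Real.continuousAt_rpow_const 0 α (Or.inr hα0.le)).tendsto
      rw [Real.zero_rpow hα0.ne'] at this
      exact this.mono_left nhdsWithin_le_nhds
    have hg : Tendsto (fun x : ℝ => Real.cot (π * α) + x ^ α / s) (𝓝[>] (0:ℝ))
        (𝓝 (Real.cot (π * α))) := by
      have := ((hy0.div_const s).const_add (Real.cot (π * α)))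
      simpa using this
    have harc : Tendsto (fun x : ℝ => Real.arctan (Real.cot (π * α) + x ^ α / s))
        (𝓝[>] (0:ℝ)) (𝓝 (Real.arctan (Real.cot (π * α)))) :=
      (Real.continuous_arctan.continuousAt.tendsto).comp hg
    have hval : Real.arctan (Real.cot (π * α)) = π / 2 - π * α := by
      have htan : Real.cot (π * α) = Real.tan (π / 2 - π * α) := by
        rw [Real.tan_pi_div_two_sub, Real.cot_eq_cos_div_sin, Real.tan_eq_sin_div_cos,
          inv_div]
      rw [htan, Real.arctan_tan (by linarith) (by linarith)]
    rw [hFeq]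
    have := ((harc.const_sub (π / 2)).const_mul (1 / (π * α))).const_sub 1
    have heq : (1:ℝ) - 1 / (π * α) * (π / 2 - Real.arctan (Real.cot (π * α))) = 0 := by
      rw [hval]; field_simp; ring
    rw [heq] at this
    exact this
  · have hy : Tendsto (fun x : ℝ => x ^ α) atTop atTop := tendsto_rpow_atTop hα0
    have hg : Tendsto (fun x : ℝ => Real.cot (π * α) + x ^ α / s) atTop atTop :=
      tendsto_atTop_add_const_left _ _ (hy.atTop_div_const hs)
    have harc : Tendsto (fun x : ℝ => Real.arctan (Real.cot (π * α) + x ^ α / s))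
        atTop (𝓝 (π / 2)) :=
      (Real.tendsto_arctan_atTop.mono_right nhdsWithin_le_nhds).comp hg
    rw [hFeq]
    have := ((harc.const_sub (π / 2)).const_mul (1 / (π * α))).const_sub 1
    simpa using this
end

section
/- For 0 < α < 1 and 0 < y < 1, the cdf F_{X_α}(x) = 1 − (1/(πα)) arccot( cot(πα) + x^α/sin(πα) ) has inverse given by F_{X_α}^{-1}(y) = ( sin(παy) / sin(πα(1−y)) )^{1/α}, i.e., F_{X_α}( (sin(παy)/sin(πα(1−y)))^{1/α} ) = y. -/
open Real Set

theorem stmt_2 (α y : ℝ) (hα0 : 0 < α) (hα1 : α < 1) (hy0 : 0 < y) (hy1 : y < 1) :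
    1 - (1 / (π * α)) *
        arccot (Real.cot (π * α) +
          ((Real.sin (π * α * y) / Real.sin (π * α * (1 - y))) ^ (1/α)) ^ α /
            Real.sin (π * α)) = y := by
  have hπ : (0:ℝ) < π := Real.pi_pos
  have hπα0 : 0 < π * α := by positivity
  have hπαπ : π * α < π := by nlinarith
  have hsα : 0 < Real.sin (π * α) := Real.sin_pos_of_pos_of_lt_pi hπα0 hπαπ
  set θ := π * α * (1 - y) with hθdef
  have hθ0 : 0 < θ := by
    have h1 : 0 < 1 - y := by linarith
    positivity
  have hθπ : θ < π := by nlinarith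
  have hsθ : 0 < Real.sin θ := Real.sin_pos_of_pos_of_lt_pi hθ0 hθπ
  have hy0' : 0 < π * α * y := by positivity
  have hyπ : π * α * y < π := by nlinarith
  have hsy : 0 < Real.sin (π * α * y) := Real.sin_pos_of_pos_of_lt_pi hy0' hyπ
  have hpow : ((Real.sin (π * α * y) / Real.sin θ) ^ (1/α)) ^ α
      = Real.sin (π * α * y) / Real.sin θ := by
    rw [← Real.rpow_mul (le_of_lt (div_pos hsy hsθ)), one_div_mul_cancel hα0.ne',
      Real.rpow_one]
  have hsin_sub : Real.sin (π * α * y)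
      = Real.sin (π * α) * Real.cos θ - Real.cos (π * α) * Real.sin θ := by
    rw [show π * α * y = π * α - θ by rw [hθdef]; ring, Real.sin_sub]
  have harg : Real.cot (π * α) +
      ((Real.sin (π * α * y) / Real.sin θ) ^ (1/α)) ^ α / Real.sin (π * α)
      = Real.cos θ / Real.sin θ := by
    rw [hpow, Real.cot_eq_cos_div_sin, hsin_sub]
    field_simp
    ring
  have htan : Real.tan (π / 2 - θ) = Real.cos θ / Real.sin θ := by
    rw [Real.tan_eq_sin_div_cos, Real.sin_pi_div_two_sub, Real.cos_pi_div_two_sub]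
  have harc : arccot (Real.cos θ / Real.sin θ) = θ := by
    rw [arccot, ← htan, Real.arctan_tan (by linarith) (by linarith)]
    ring
  rw [harg, harc, hθdef]
  field_simp
  ring
end

section
/- For 0 < α < 1 and y > 0, with F = F_{X_α}(y) = 1 − (1/(πα)) arccot( cot(πα) + y^α/sin(πα) ), one has the identity sin(πα(1−F)) = y^{−α} sin(πα F) = sin(πα) / (y^{2α} + 2y^α cos(πα) + 1)^{1/2}. -/
open Real Set

theorem stmt_3 (α y : ℝ) (hα0 : 0 < α) (hα1 : α < 1) (hy : 0 < y)
    (F : ℝ) (hF : F = 1 - (1 / (π * α)) *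
        arccot (Real.cot (π * α) + y ^ α / Real.sin (π * α))) :
    Real.sin (π * α * (1 - F)) = y ^ (-α) * Real.sin (π * α * F)
    ∧ Real.sin (π * α * (1 - F)) =
        Real.sin (π * α) /
          (y ^ (2 * α) + 2 * y ^ α * Real.cos (π * α) + 1) ^ ((1:ℝ)/2) := by
  have hπ : (0:ℝ) < π := Real.pi_pos
  have hπα : 0 < π * α := by positivity
  have hπα1 : π * α < π := by nlinarith
  have hs : 0 < Real.sin (π * α) := Real.sin_pos_of_pos_of_lt_pi hπα hπα1
  have hyα : 0 < y ^ α := Real.rpow_pos_of_pos hy α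
  set x : ℝ := Real.cot (π * α) + y ^ α / Real.sin (π * α) with hx
  -- key algebraic identity
  have hkey : Real.sin (π * α) * x = Real.cos (π * α) + y ^ α := by
    rw [hx, Real.cot_eq_cos_div_sin]
    field_simp
  set D : ℝ := y ^ (2 * α) + 2 * y ^ α * Real.cos (π * α) + 1 with hDdef
  have h2α : y ^ (2 * α) = y ^ α * y ^ α := by
    rw [two_mul, Real.rpow_add hy]
  have hcs : Real.sin (π * α) ^ 2 + Real.cos (π * α) ^ 2 = 1 :=
    Real.sin_sq_add_cos_sq _
  have hD : 0 < D := by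
    have : D = (y ^ α + Real.cos (π * α)) ^ 2 + Real.sin (π * α) ^ 2 := by
      rw [hDdef, h2α]; nlinarith
    nlinarith [sq_nonneg (y ^ α + Real.cos (π * α))]
  have hDx : 1 + x ^ 2 = D / Real.sin (π * α) ^ 2 := by
    have hxv : x = (Real.cos (π * α) + y ^ α) / Real.sin (π * α) := by
      rw [← hkey]; field_simp
    rw [hxv, hDdef, h2α]
    field_simp
    nlinarith [hcs]
  have hsqrt : Real.sqrt (1 + x ^ 2) = Real.sqrt D / Real.sin (π * α) := by
    rw [hDx, Real.sqrt_div hD.le, Real.sqrt_sq hs.le]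
  have hsqrtD : 0 < Real.sqrt D := Real.sqrt_pos.mpr hD
  -- angles
  have hθ1 : π * α * (1 - F) = π / 2 - Real.arctan x := by
    rw [hF]; field_simp [arccot]; unfold arccot; ring
  have hθ2 : π * α * F = π * α - (π / 2 - Real.arctan x) := by
    rw [hF]; field_simp [arccot]; unfold arccot; ring
  have hsin1 : Real.sin (π * α * (1 - F)) = 1 / Real.sqrt (1 + x ^ 2) := by
    rw [hθ1, Real.sin_pi_div_two_sub, Real.cos_arctan]
  have hsin2 : Real.sin (π * α * F) = y ^ α / Real.sqrt (1 + x ^ 2) := by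
    rw [hθ2, Real.sin_sub, Real.cos_pi_div_two_sub, Real.sin_pi_div_two_sub,
      Real.sin_arctan, Real.cos_arctan]
    have hk2 : Real.sin (π * α) * x - Real.cos (π * α) = y ^ α := by
      linarith [hkey]
    rw [show Real.sin (π * α) * (x / Real.sqrt (1 + x ^ 2)) -
        Real.cos (π * α) * (1 / Real.sqrt (1 + x ^ 2)) =
        (Real.sin (π * α) * x - Real.cos (π * α)) / Real.sqrt (1 + x ^ 2) by ring,
      hk2]
  have hyneg : y ^ (-α) * y ^ α = 1 := by
    rw [← Real.rpow_add hy]; simp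
  constructor
  · rw [hsin1, hsin2]
    rw [show y ^ (-α) * (y ^ α / Real.sqrt (1 + x ^ 2)) =
        (y ^ (-α) * y ^ α) / Real.sqrt (1 + x ^ 2) by ring, hyneg]
  · rw [hsin1, hsqrt, ← Real.sqrt_eq_rpow]
    field_simp
end

section
/- For x > 0: ∫₀^∞ log|x − y| / (1+y)² dy = (x/(1+x)) · log(x). -/
open Real MeasureTheory Set Filter

noncomputable def myF (x y : ℝ) : ℝ :=
  ((x - y) * Real.log (x - y)) * (-(((1 + x) * (1 + y))⁻¹)) - Real.log (1 + y) / (1 + x)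

lemma myF_deriv (x : ℝ) (hx : 0 < x) {y : ℝ} (hy : 0 ≤ y) (hne : y ≠ x) :
    HasDerivAt (myF x) (Real.log (x - y) / (1 + y) ^ 2) y := by
  have h1y : (1 : ℝ) + y ≠ 0 := by positivity
  have h1x : (1 : ℝ) + x ≠ 0 := by positivity
  have hxy : x - y ≠ 0 := sub_ne_zero.2 fun h => hne h.symm
  have hM : (1 + x) * (1 + y) ≠ 0 := mul_ne_zero h1x h1y
  have hid : HasDerivAt (fun y : ℝ => x - y) (-1) y := (hasDerivAt_id y).const_sub x
  have hA : HasDerivAt (fun y : ℝ => (x - y) * Real.log (x - y))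
      ((-1) * Real.log (x - y) + (x - y) * ((-1) / (x - y))) y := hid.mul (hid.log hxy)
  have hB : HasDerivAt (fun y : ℝ => -(((1 + x) * (1 + y))⁻¹))
      (-(-((1 + x) * 1) / ((1 + x) * (1 + y)) ^ 2)) y := by
    exact ((((hasDerivAt_id y).const_add 1).const_mul (1 + x)).inv hM).neg
  have hC : HasDerivAt (fun y : ℝ => Real.log (1 + y) / (1 + x))
      ((1 / (1 + y)) / (1 + x)) y := (((hasDerivAt_id y).const_add 1).log h1y).div_const _
  have := (hA.mul hB).sub hC
  refine this.congr_deriv ?_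
  field_simp
  ring

lemma myF_contAt (x : ℝ) {y : ℝ} (hy : 0 ≤ y) (hx : 0 < x) : ContinuousAt (myF x) y := by
  have h1y : (1 : ℝ) + y ≠ 0 := by positivity
  have h1x : (1 : ℝ) + x ≠ 0 := by positivity
  apply ContinuousAt.sub
  · apply ContinuousAt.mul
    · exact (Real.continuous_mul_log.comp (continuous_const.sub continuous_id)).continuousAt
    · exact (((continuous_const.mul (continuous_const.add continuous_id)).continuousAt).inv₀
        (mul_ne_zero h1x h1y)).neg
  · exact ((Real.continuousAt_log h1y).comp
      ((continuous_const.add continuous_id).continuousAt)).div_const _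

lemma myF_tendsto (x : ℝ) (hx : 0 < x) : Tendsto (myF x) atTop (nhds 0) := by
  have h1x : (1 : ℝ) + x ≠ 0 := by positivity
  have T1 : Tendsto (fun y : ℝ => (y - x) / (1 + y)) atTop (nhds 1) := by
    have h0 : Tendsto (fun y : ℝ => (1 + y)⁻¹) atTop (nhds 0) :=
      tendsto_inv_atTop_zero.comp (tendsto_atTop_add_const_left _ 1 tendsto_id)
    have : Tendsto (fun y : ℝ => 1 - (1 + x) * (1 + y)⁻¹) atTop (nhds (1 - (1 + x) * 0)) :=
      tendsto_const_nhds.sub (h0.const_mul _)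
    rw [mul_zero, sub_zero] at this
    refine this.congr' ?_
    filter_upwards [eventually_gt_atTop (0 : ℝ)] with y hy
    have h1y : (1 : ℝ) + y ≠ 0 := by positivity
    field_simp
    ring
  have T2 : Tendsto (fun y : ℝ => Real.log ((y - x) / (1 + y))) atTop (nhds 0) := by
    have := ((Real.continuousAt_log one_ne_zero).tendsto).comp T1
    simpa [Function.comp_def] using this
  have T3 : Tendsto (fun y : ℝ => Real.log (y - x) / (y - x)) atTop (nhds 0) := by
    have h := Real.isLittleO_log_id_atTop.tendsto_div_nhds_zero
    have hc : Tendsto (fun y : ℝ => y - x) atTop atTop :=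
      tendsto_atTop_add_const_right _ (-x) tendsto_id
    simpa [Function.comp_def, sub_eq_add_neg] using h.comp hc
  have T : Tendsto (fun y : ℝ =>
      (1 + x)⁻¹ * Real.log ((y - x) / (1 + y)) - Real.log (y - x) / (y - x) * ((y - x) / (1 + y)))
      atTop (nhds ((1 + x)⁻¹ * 0 - 0 * 1)) := (T2.const_mul _).sub (T3.mul T1)
  rw [mul_zero, zero_mul, sub_zero] at T
  refine T.congr' ?_
  filter_upwards [eventually_gt_atTop (max x 0)] with y hy
  have hxy : 0 < y - x := sub_pos.2 (lt_of_le_of_lt (le_max_left _ _) hy)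
  have hy0 : 0 < y := lt_of_le_of_lt (le_max_right _ _) hy
  have h1y : (0:ℝ) < 1 + y := by linarith
  have h1x' : (0:ℝ) < 1 + x := by linarith
  unfold myF
  rw [show x - y = -(y - x) by ring, Real.log_neg_eq_log,
    Real.log_div (ne_of_gt hxy) (ne_of_gt h1y)]
  field_simp
  ring

lemma log_int_Ioc01 : IntegrableOn Real.log (Ioc (0:ℝ) 1) := by
  have hg : ∀ y ∈ Ioo (0:ℝ) 1, HasDerivAt (fun t => t - t * Real.log t) (-Real.log y) y := by
    intro y hy
    have h1 : HasDerivAt (fun t : ℝ => t * Real.log t)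
        (1 * Real.log y + y * y⁻¹) y :=
      (hasDerivAt_id y).mul (Real.hasDerivAt_log (ne_of_gt hy.1))
    have := (hasDerivAt_id y).sub h1
    refine this.congr_deriv ?_
    rw [mul_inv_cancel₀ (ne_of_gt hy.1)]
    ring
  have hcont : ContinuousOn (fun t : ℝ => t - t * Real.log t) (Icc 0 1) :=
    (continuous_id.sub Real.continuous_mul_log).continuousOn
  have h := intervalIntegral.integrableOn_deriv_of_nonneg hcont hg
    (fun y hy => neg_nonneg.2 (Real.log_nonpos hy.1.le hy.2.le))
  have h2 := h.neg
  refine (integrableOn_congr_fun (fun y _ => ?_) measurableSet_Ioc).mp h2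
  simp

lemma log_int_Ioc (c : ℝ) (_hc : 0 < c) : IntegrableOn Real.log (Ioc (0:ℝ) c) := by
  rcases le_or_gt c 1 with h | h
  · exact log_int_Ioc01.mono_set (Ioc_subset_Ioc_right h)
  · rw [← Set.Ioc_union_Ioc_eq_Ioc zero_le_one h.le]
    refine log_int_Ioc01.union ?_
    refine ((Real.continuousOn_log.mono ?_).integrableOn_Icc).mono_set Ioc_subset_Icc_self
    intro y hy
    simp only [mem_compl_iff, mem_singleton_iff]
    intro h0
    rw [h0] at hy
    exact absurd hy.1 (by norm_num)

lemma log_int_Iocneg : IntegrableOn Real.log (Ioc (-1:ℝ) 0) := by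
  have h1 : IntervalIntegrable Real.log volume 0 1 :=
    (intervalIntegrable_iff_integrableOn_Ioc_of_le zero_le_one).2 log_int_Ioc01
  have h2 := h1.comp_sub_left 0
  have h3 : IntervalIntegrable Real.log volume 0 (-1) := by
    simpa [zero_sub, Real.log_neg_eq_log] using h2
  have h4 := h3.symm
  rw [intervalIntegrable_iff, Set.uIoc_of_le (by norm_num : (-1:ℝ) ≤ 0)] at h4
  exact h4

lemma f_int (x : ℝ) (hx : 0 < x) :
    IntegrableOn (fun y => Real.log (x - y) / (1 + y) ^ 2) (Ioi (0:ℝ)) := by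
  have hmeas : Measurable (fun y : ℝ => Real.log (x - y) / (1 + y) ^ 2) :=
    (Real.measurable_log.comp (measurable_const.sub measurable_id)).div
      ((measurable_const.add measurable_id).pow_const 2)
  have hInt1 : IntegrableOn (fun y => Real.log (x - y) / (1 + y) ^ 2) (Ioc 0 (x + 1)) := by
    have hlogIoc : IntegrableOn Real.log (Ioc (-1:ℝ) x) := by
      rw [← Set.Ioc_union_Ioc_eq_Ioc (by norm_num : (-1:ℝ) ≤ 0) hx.le]
      exact log_int_Iocneg.union (log_int_Ioc x hx)
    have h4 : IntervalIntegrable Real.log volume x (-1) := by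
      rw [intervalIntegrable_iff, Set.uIoc_comm, Set.uIoc_of_le (by linarith)]
      exact hlogIoc
    have h5 := h4.comp_sub_left x
    have hli : IntervalIntegrable (fun y => Real.log (x - y)) volume 0 (x + 1) := by
      simpa [sub_self, sub_neg_eq_add] using h5
    have hcontOn : ContinuousOn (fun y : ℝ => ((1 + y) ^ 2)⁻¹) (Set.uIcc 0 (x + 1)) := by
      refine ContinuousOn.inv₀ ((continuous_const.add continuous_id).pow 2).continuousOn ?_
      intro y hy
      rw [Set.uIcc_of_le (by linarith)] at hy
      have : (0:ℝ) ≤ y := hy.1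
      positivity
    have hf1 := hli.mul_continuousOn hcontOn
    rw [intervalIntegrable_iff_integrableOn_Ioc_of_le (by linarith)] at hf1
    exact hf1.congr_fun (fun y _ => (div_eq_mul_inv _ _).symm) measurableSet_Ioc
  have hInt2 : IntegrableOn (fun y => Real.log (x - y) / (1 + y) ^ 2) (Ioi (x + 1)) := by
    have hg : IntegrableOn (fun y : ℝ => 2 * y ^ (-3/2 : ℝ)) (Ioi (x + 1)) :=
      (integrableOn_Ioi_rpow_of_lt (by norm_num) (by linarith)).const_mul 2
    refine hg.mono' hmeas.aestronglyMeasurable.restrict ?_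
    rw [ae_restrict_iff' measurableSet_Ioi]
    refine ae_of_all _ fun y hy => ?_
    simp only [mem_Ioi] at hy
    have hy0 : 0 < y := by linarith
    have hyx : 1 ≤ y - x := by linarith
    have h1y : (0:ℝ) < 1 + y := by linarith
    have habs : |Real.log (x - y)| = Real.log (y - x) := by
      rw [show x - y = -(y - x) by ring, Real.log_neg_eq_log]
      exact abs_of_nonneg (Real.log_nonneg hyx)
    have hnum : Real.log (y - x) ≤ 2 * y ^ ((1:ℝ)/2) := by
      have h1 := Real.log_le_rpow_div (by linarith : (0:ℝ) ≤ y - x) (by norm_num : (0:ℝ) < 1/2)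
      have h2 : (y - x) ^ ((1:ℝ)/2) ≤ y ^ ((1:ℝ)/2) :=
        Real.rpow_le_rpow (by linarith) (by linarith) (by norm_num)
      calc Real.log (y - x) ≤ (y - x) ^ ((1:ℝ)/2) / (1/2) := h1
        _ = 2 * (y - x) ^ ((1:ℝ)/2) := by ring
        _ ≤ 2 * y ^ ((1:ℝ)/2) := by linarith
    have hden : y ^ 2 ≤ (1 + y) ^ 2 := by nlinarith
    rw [Real.norm_eq_abs, abs_div, habs, abs_of_nonneg (by positivity : (0:ℝ) ≤ (1 + y) ^ 2)]
    calc Real.log (y - x) / (1 + y) ^ 2 ≤ (2 * y ^ ((1:ℝ)/2)) / y ^ 2 := by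
          apply div_le_div₀ (by positivity) hnum (by positivity) hden
      _ = 2 * y ^ (-3/2 : ℝ) := by
          rw [mul_div_assoc, ← Real.rpow_two, ← Real.rpow_sub hy0]
          norm_num
  rw [← Set.Ioc_union_Ioi_eq_Ioi (by linarith : (0:ℝ) ≤ x + 1)]
  exact hInt1.union hInt2

theorem stmt_5 (x : ℝ) (hx : 0 < x) :
    ∫ y in Ioi (0:ℝ), Real.log |x - y| / (1 + y) ^ 2
      = (x / (1 + x)) * Real.log x := by
  have h1x : (0:ℝ) < 1 + x := by linarith
  simp only [Real.log_abs]
  have hInt := f_int x hx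
  have hsplit : ∫ y in Ioi (0:ℝ), Real.log (x - y) / (1 + y) ^ 2
      = (∫ y in Ioc (0:ℝ) x, Real.log (x - y) / (1 + y) ^ 2)
        + ∫ y in Ioi x, Real.log (x - y) / (1 + y) ^ 2 := by
    rw [← Set.Ioc_union_Ioi_eq_Ioi hx.le]
    exact setIntegral_union (Set.Ioc_disjoint_Ioi le_rfl) measurableSet_Ioi
      (hInt.mono_set (by rw [← Set.Ioc_union_Ioi_eq_Ioi hx.le]; exact subset_union_left))
      (hInt.mono_set (by rw [← Set.Ioc_union_Ioi_eq_Ioi hx.le]; exact subset_union_right))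
  have hpart1 : ∫ y in Ioc (0:ℝ) x, Real.log (x - y) / (1 + y) ^ 2 = myF x x - myF x 0 := by
    rw [← intervalIntegral.integral_of_le hx.le]
    refine intervalIntegral.integral_eq_sub_of_hasDeriv_right_of_le hx.le ?_ ?_ ?_
    · exact fun y hy => (myF_contAt x hy.1 hx).continuousWithinAt
    · exact fun y hy => (myF_deriv x hx hy.1.le (ne_of_lt hy.2)).hasDerivWithinAt
    · rw [intervalIntegrable_iff_integrableOn_Ioc_of_le hx.le]
      exact hInt.mono_set Set.Ioc_subset_Ioi_self
  have hpart2 : ∫ y in Ioi x, Real.log (x - y) / (1 + y) ^ 2 = 0 - myF x x := by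
    exact MeasureTheory.integral_Ioi_of_hasDerivAt_of_tendsto
      (myF_contAt x hx.le hx).continuousWithinAt
      (fun y hy => myF_deriv x hx (le_of_lt (hx.trans hy)) (ne_of_gt hy))
      (hInt.mono_set (Set.Ioi_subset_Ioi hx.le)) (myF_tendsto x hx)
  rw [hsplit, hpart1, hpart2]
  have h0 : myF x 0 = -(x / (1 + x) * Real.log x) := by
    unfold myF
    rw [sub_zero, add_zero, Real.log_one, mul_one]
    field_simp
    ring
  rw [h0]
  ring
end

section
/- Let G₁ and E be independent exponential(1) random variables and 0 < p < 1, q = 1 − p. Then the random variable p²G₁/(p²G₁ + q²E) has density y ↦ p²q²/(p²(1−y)+q²y)² on (0,1). -/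
open Real MeasureTheory Set ProbabilityTheory

lemma exp_measure_def : expMeasure 1 = volume.withDensity (exponentialPDF 1) := rfl

lemma measurable_exponentialPDF (r : ℝ) : Measurable (exponentialPDF r) :=
  (measurable_exponentialPDFReal r).ennreal_ofReal

lemma aux_Iic (t : ℝ) :
    expMeasure 1 (Iic t) = ENNReal.ofReal (if 0 ≤ t then 1 - Real.exp (-t) else 0) := by
  rw [exp_measure_def, withDensity_apply _ measurableSet_Iic]
  simpa using lintegral_exponentialPDF_eq_antiDeriv one_pos t

lemma aux_Iio (t : ℝ) : expMeasure 1 (Iio t)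
    = ENNReal.ofReal (if 0 ≤ t then 1 - Real.exp (-t) else 0) := by
  rw [exp_measure_def, withDensity_apply _ measurableSet_Iio,
    setLIntegral_congr (Iio_ae_eq_Iic (a := t)), ← withDensity_apply _ measurableSet_Iic,
    ← exp_measure_def, aux_Iic]

lemma aux_Ici (t : ℝ) (ht : 0 ≤ t) :
    expMeasure 1 (Ici t) = ENNReal.ofReal (Real.exp (-t)) := by
  haveI : IsProbabilityMeasure (expMeasure 1) := ProbabilityTheory.isProbabilityMeasure_expMeasure one_pos
  have : Ici t = (Iio t)ᶜ := by simp
  rw [this, measure_compl measurableSet_Iio (measure_ne_top _ _), measure_univ, aux_Iio,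
    if_pos ht]
  rw [← ENNReal.ofReal_one, ← ENNReal.ofReal_sub _ (by
    have := Real.exp_nonneg (-t); linarith [Real.exp_le_one_iff.mpr (neg_nonpos_of_nonneg ht)])]
  norm_num

lemma aux_ae_pos : ∀ᵐ g ∂(expMeasure 1), 0 < g := by
  rw [ae_iff]
  have h : {g : ℝ | ¬ 0 < g} = Iic 0 := by ext x; simp [not_lt]
  rw [h, aux_Iic]; simp

lemma aux_exp_lintegral (c : ℝ) (hc : 0 ≤ c) :
    ∫⁻ g, ENNReal.ofReal (Real.exp (-(c * g))) ∂(expMeasure 1)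
      = ENNReal.ofReal (1 / (1 + c)) := by
  have hmeas : Measurable fun g : ℝ => ENNReal.ofReal (Real.exp (-(c * g))) := by
    fun_prop
  rw [exp_measure_def, lintegral_withDensity_eq_lintegral_mul _ (measurable_exponentialPDF 1) hmeas]
  have hpt : ∀ g : ℝ, (exponentialPDF 1 * fun g => ENNReal.ofReal (Real.exp (-(c * g)))) g
      = ENNReal.ofReal (1 / (1 + c)) * exponentialPDF (1 + c) g := by
    intro g
    simp only [Pi.mul_apply, exponentialPDF_eq]
    rcases le_or_gt 0 g with hg | hg
    · rw [if_pos hg, if_pos hg, ← ENNReal.ofReal_mul (by positivity),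
        ← ENNReal.ofReal_mul (by positivity)]
      congr 1
      rw [one_mul, ← Real.exp_add]
      rw [show 1 / (1 + c) * ((1 + c) * Real.exp (-((1 + c) * g)))
          = Real.exp (-((1 + c) * g)) by field_simp]
      congr 1; ring
    · rw [if_neg (not_le.mpr hg), if_neg (not_le.mpr hg)]
      simp
  rw [lintegral_congr hpt, lintegral_const_mul _ (measurable_exponentialPDF (1 + c)),
    lintegral_exponentialPDF_eq_one (by linarith), mul_one]

lemma aux_denom_pos {p q t : ℝ} (hp : 0 < p) (hq : 0 < q) (ht0 : 0 ≤ t) (ht1 : t ≤ 1) :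
    0 < p ^ 2 * (1 - t) + q ^ 2 * t := by
  rcases lt_or_ge t 1 with h | h
  · have h1 : (0:ℝ) < 1 - t := by linarith
    have : 0 < p ^ 2 * (1 - t) := by positivity
    nlinarith [mul_nonneg (sq_nonneg q) ht0]
  · have ht : t = 1 := le_antisymm ht1 h
    subst ht
    have : 0 < q ^ 2 := by positivity
    nlinarith [sq_nonneg p]

lemma aux_hasDeriv {p q : ℝ} (hp : 0 < p) (hq : 0 < q) {t : ℝ} (ht0 : 0 ≤ t) (ht1 : t ≤ 1) :
    HasDerivAt (fun t => q ^ 2 * t / (p ^ 2 * (1 - t) + q ^ 2 * t))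
      (p ^ 2 * q ^ 2 / (p ^ 2 * (1 - t) + q ^ 2 * t) ^ 2) t := by
  have hd := aux_denom_pos hp hq ht0 ht1
  have h1 : HasDerivAt (fun t : ℝ => q ^ 2 * t) (q ^ 2) t := by
    simpa using (hasDerivAt_id t).const_mul (q ^ 2)
  have h2 : HasDerivAt (fun t : ℝ => p ^ 2 * (1 - t) + q ^ 2 * t) (q ^ 2 - p ^ 2) t := by
    have := (((hasDerivAt_id t).const_sub 1).const_mul (p ^ 2)).add
      ((hasDerivAt_id t).const_mul (q ^ 2))
    exact this.congr_deriv (by ring)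
  have h := h1.div h2 (ne_of_gt hd)
  refine h.congr_deriv ?_
  rw [div_left_inj' (pow_ne_zero 2 (ne_of_gt hd))]
  ring

lemma aux_FTC {p q : ℝ} (hp : 0 < p) (hq : 0 < q) {a b : ℝ} (ha : 0 ≤ a) (hab : a ≤ b)
    (hb : b ≤ 1) :
    ∫⁻ t in Ioc a b, ENNReal.ofReal (p ^ 2 * q ^ 2 / (p ^ 2 * (1 - t) + q ^ 2 * t) ^ 2)
      = ENNReal.ofReal (q ^ 2 * b / (p ^ 2 * (1 - b) + q ^ 2 * b)
          - q ^ 2 * a / (p ^ 2 * (1 - a) + q ^ 2 * a)) := by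
  have hcont : ContinuousOn (fun t => p ^ 2 * q ^ 2 / (p ^ 2 * (1 - t) + q ^ 2 * t) ^ 2)
      (Icc a b) := by
    apply ContinuousOn.div continuousOn_const (by fun_prop)
    intro t ht
    exact pow_ne_zero _ (ne_of_gt (aux_denom_pos hp hq (ha.trans ht.1) (ht.2.trans hb)))
  have hint : IntegrableOn (fun t => p ^ 2 * q ^ 2 / (p ^ 2 * (1 - t) + q ^ 2 * t) ^ 2)
      (Ioc a b) volume :=
    (hcont.integrableOn_Icc).mono_set Ioc_subset_Icc_self
  rw [← ofReal_integral_eq_lintegral_ofReal hint (ae_of_all _ fun t => by positivity)]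
  congr 1
  rw [← intervalIntegral.integral_of_le hab]
  rw [intervalIntegral.integral_eq_sub_of_hasDerivAt
    (fun t ht => by
      rw [uIcc_of_le hab] at ht
      exact aux_hasDeriv hp hq (ha.trans ht.1) (ht.2.trans hb))
    ((hcont.mono (by rw [uIcc_of_le hab])).intervalIntegrable)]

theorem stmt_7 {Ω : Type*} [MeasureSpace Ω] [IsProbabilityMeasure (ℙ : Measure Ω)]
    (G E : Ω → ℝ) (hGE : IndepFun G E)
    (hG : Measure.map G ℙ = expMeasure 1)
    (hE : Measure.map E ℙ = expMeasure 1)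
    (p q : ℝ) (hp0 : 0 < p) (hp1 : p < 1) (hq : q = 1 - p) :
    Measure.map (fun ω => p ^ 2 * G ω / (p ^ 2 * G ω + q ^ 2 * E ω)) ℙ
      = volume.withDensity (fun y => ENNReal.ofReal
          (Set.indicator (Ioo (0:ℝ) 1)
            (fun y => p ^ 2 * q ^ 2 / (p ^ 2 * (1 - y) + q ^ 2 * y) ^ 2) y)) := by
  have hq0 : 0 < q := by rw [hq]; linarith
  haveI hμp : IsProbabilityMeasure (expMeasure 1) := ProbabilityTheory.isProbabilityMeasure_expMeasure one_pos
  have hGm : AEMeasurable G ℙ := aemeasurable_of_map_neZero (by rw [hG]; infer_instance)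
  have hEm : AEMeasurable E ℙ := aemeasurable_of_map_neZero (by rw [hE]; infer_instance)
  set μ := expMeasure 1 with hμdef
  set φ : ℝ × ℝ → ℝ := fun x => p ^ 2 * x.1 / (p ^ 2 * x.1 + q ^ 2 * x.2) with hφdef
  have hφm : Measurable φ := by fun_prop
  have hpair : Measure.map (fun ω => (G ω, E ω)) ℙ = μ.prod μ := by
    have h := (indepFun_iff_map_prod_eq_prod_map_map hGm hEm).mp hGE
    rwa [hG, hE] at h
  have hmap : Measure.map (fun ω => p ^ 2 * G ω / (p ^ 2 * G ω + q ^ 2 * E ω)) ℙ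
      = Measure.map φ (μ.prod μ) := by
    rw [← hpair, AEMeasurable.map_map_of_aemeasurable hφm.aemeasurable (hGm.prodMk hEm)]
    rfl
  rw [hmap]
  haveI : IsProbabilityMeasure (Measure.map φ (μ.prod μ)) :=
    Measure.isProbabilityMeasure_map hφm.aemeasurable
  refine Measure.ext_of_Iic _ _ fun y => ?_
  -- LHS as an iterated integral
  rw [Measure.map_apply hφm measurableSet_Iic,
    Measure.prod_apply (hφm measurableSet_Iic)]
  -- RHS as an integral over `Ioo 0 1 ∩ Iic y`
  rw [withDensity_apply _ measurableSet_Iic]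
  have hind : (fun t => ENNReal.ofReal (Set.indicator (Ioo (0:ℝ) 1)
      (fun t => p ^ 2 * q ^ 2 / (p ^ 2 * (1 - t) + q ^ 2 * t) ^ 2) t))
      = Set.indicator (Ioo (0:ℝ) 1)
        (fun t => ENNReal.ofReal (p ^ 2 * q ^ 2 / (p ^ 2 * (1 - t) + q ^ 2 * t) ^ 2)) := by
    funext t
    by_cases h : t ∈ Ioo (0:ℝ) 1 <;> simp [h]
  rw [hind, lintegral_indicator measurableSet_Ioo, Measure.restrict_restrict measurableSet_Ioo]
  rcases le_or_gt y 0 with hy0 | hy0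
  · -- y ≤ 0 : both sides vanish
    have hset : Ioo (0:ℝ) 1 ∩ Iic y = ∅ := by
      ext t; simp only [mem_inter_iff, mem_Ioo, mem_Iic, mem_empty_iff_false, iff_false]
      rintro ⟨⟨h1, _⟩, h2⟩; linarith
    rw [hset, Measure.restrict_empty, lintegral_zero_measure]
    have hzero : ∀ᵐ g ∂μ, μ (Prod.mk g ⁻¹' (φ ⁻¹' Iic y)) = 0 := by
      filter_upwards [aux_ae_pos] with g hg
      have hset2 : Prod.mk g ⁻¹' (φ ⁻¹' Iic y) =ᵐ[μ] (∅ : Set ℝ) := by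
        rw [Filter.eventuallyEq_set]
        filter_upwards [aux_ae_pos] with e he
        simp only [mem_preimage, mem_Iic, mem_empty_iff_false, iff_false, not_le, hφdef]
        have hD : 0 < p ^ 2 * g + q ^ 2 * e := by positivity
        have : 0 < p ^ 2 * g / (p ^ 2 * g + q ^ 2 * e) := by positivity
        linarith
      rw [measure_congr hset2, measure_empty]
    rw [lintegral_congr_ae hzero, lintegral_zero]
  rcases lt_or_ge y 1 with hy1 | hy1
  · -- 0 < y < 1
    set c := p ^ 2 * (1 - y) / (q ^ 2 * y) with hc
    have hy1' : (0:ℝ) < 1 - y := by linarith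
    have hc0 : 0 ≤ c := by positivity
    have hslice : ∀ᵐ g ∂μ, μ (Prod.mk g ⁻¹' (φ ⁻¹' Iic y))
        = ENNReal.ofReal (Real.exp (-(c * g))) := by
      filter_upwards [aux_ae_pos] with g hg
      have hset2 : Prod.mk g ⁻¹' (φ ⁻¹' Iic y) =ᵐ[μ] Ici (c * g) := by
        rw [Filter.eventuallyEq_set]
        filter_upwards [aux_ae_pos] with e he
        simp only [mem_preimage, mem_Iic, mem_Ici, hφdef]
        have hD : 0 < p ^ 2 * g + q ^ 2 * e := by positivity
        have hqy : 0 < q ^ 2 * y := by positivity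
        rw [div_le_iff₀ hD, hc, div_mul_eq_mul_div, div_le_iff₀ hqy]
        constructor <;> intro h <;> nlinarith
      rw [measure_congr hset2, aux_Ici _ (by positivity)]
    rw [lintegral_congr_ae hslice, aux_exp_lintegral c hc0]
    have hset : Ioo (0:ℝ) 1 ∩ Iic y = Ioc 0 y := by
      ext t
      simp only [mem_inter_iff, mem_Ioo, mem_Iic, mem_Ioc]
      constructor
      · rintro ⟨⟨h1, h2⟩, h3⟩; exact ⟨h1, h3⟩
      · rintro ⟨h1, h2⟩; exact ⟨⟨h1, by linarith⟩, h2⟩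
    rw [hset, aux_FTC hp0 hq0 le_rfl hy0.le hy1.le]
    congr 1
    have hden : (0:ℝ) < p ^ 2 * (1 - y) + q ^ 2 * y := aux_denom_pos hp0 hq0 hy0.le hy1.le
    have h1c : (0:ℝ) < 1 + c := by linarith
    rw [hc]
    field_simp
    ring
  · -- 1 ≤ y
    have hone : ∀ᵐ g ∂μ, μ (Prod.mk g ⁻¹' (φ ⁻¹' Iic y)) = 1 := by
      filter_upwards [aux_ae_pos] with g hg
      have hset2 : Prod.mk g ⁻¹' (φ ⁻¹' Iic y) =ᵐ[μ] (univ : Set ℝ) := by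
        rw [Filter.eventuallyEq_set]
        filter_upwards [aux_ae_pos] with e he
        simp only [mem_preimage, mem_Iic, mem_univ, iff_true, hφdef]
        have hD : 0 < p ^ 2 * g + q ^ 2 * e := by positivity
        have h1 : p ^ 2 * g / (p ^ 2 * g + q ^ 2 * e) ≤ 1 := by
          rw [div_le_one hD]; nlinarith
        linarith
      rw [measure_congr hset2, measure_univ]
    rw [lintegral_congr_ae hone, lintegral_one, measure_univ]
    have hset : Ioo (0:ℝ) 1 ∩ Iic y = Ioo 0 1 := by
      rw [inter_eq_left]
      intro t ht
      exact le_trans ht.2.le hy1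
    rw [hset, setLIntegral_congr (Ioo_ae_eq_Ioc (a := (0:ℝ)) (b := 1)),
      aux_FTC hp0 hq0 le_rfl zero_le_one le_rfl]
    norm_num
    rw [div_self (ne_of_gt (by positivity : (0:ℝ) < q ^ 2))]
    simp
end

section
/- The density y ↦ p q sin(απ) x^{α−1}(1−x)^{α−1} / ( π [ q² x^{2α} + p² (1−x)^{2α} + 2pq x^α (1−x)^α cos(απ) ] ) on (0,1) integrates to 1, for every 0 < α < 1 and 0 < p < 1 with q = 1−p. -/
open Real MeasureTheory Set Filter Topology

set_option maxHeartbeats 1000000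

noncomputable def Gaux (α p q : ℝ) : ℝ → ℝ := fun x =>
  if x < 1 then
    (1 / (α * π)) * Real.arctan (((q / p) * (x ^ α / (1 - x) ^ α) + Real.cos (α * π)) / Real.sin (α * π))
  else (1 / (α * π)) * (π / 2)

theorem Gaux_deriv (α p q : ℝ) (hα0 : 0 < α) (hα1 : α < 1)
    (hp0 : 0 < p) (hq0 : 0 < q) {x : ℝ} (hx : x ∈ Ioo (0:ℝ) 1) :
    HasDerivAt (Gaux α p q)
      (p * q * Real.sin (α * π) * x ^ (α - 1) * (1 - x) ^ (α - 1) /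
        (π * (q ^ 2 * x ^ (2 * α) + p ^ 2 * (1 - x) ^ (2 * α)
          + 2 * p * q * x ^ α * (1 - x) ^ α * Real.cos (α * π)))) x := by
  obtain ⟨hx0, hx1⟩ := hx
  have h1x : (0:ℝ) < 1 - x := by linarith
  have hθ0 : 0 < α * π := by positivity
  have hθπ : α * π < π := by nlinarith [Real.pi_pos]
  have hs : 0 < Real.sin (α * π) := Real.sin_pos_of_pos_of_lt_pi hθ0 hθπ
  set s := Real.sin (α * π) with hsdef
  set c := Real.cos (α * π) with hcdef
  have hX : HasDerivAt (fun y : ℝ => y ^ α) (α * x ^ (α - 1)) x := by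
    simpa using Real.hasDerivAt_rpow_const (p := α) (Or.inl hx0.ne')
  have hY : HasDerivAt (fun y : ℝ => (1 - y) ^ α) (-(α * (1 - x) ^ (α - 1))) x := by
    have h1 : HasDerivAt (fun y : ℝ => 1 - y) (-1) x := by
      simpa using (hasDerivAt_id x).const_sub 1
    have h2 : HasDerivAt (fun z : ℝ => z ^ α) (α * (1 - x) ^ (α - 1)) (1 - x) :=
      Real.hasDerivAt_rpow_const (p := α) (Or.inl h1x.ne')
    simpa [Function.comp_def] using h2.comp x h1
  have hYne : (1 - x) ^ α ≠ 0 := (Real.rpow_pos_of_pos h1x α).ne'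
  have hr : HasDerivAt (fun y : ℝ => (q / p) * (y ^ α / (1 - y) ^ α))
      ((q / p) * ((α * x ^ (α - 1) * (1 - x) ^ α - x ^ α * (-(α * (1 - x) ^ (α - 1)))) /
        ((1 - x) ^ α) ^ 2)) x :=
    (hX.div hY hYne).const_mul _
  set r' := (q / p) * ((α * x ^ (α - 1) * (1 - x) ^ α - x ^ α * (-(α * (1 - x) ^ (α - 1)))) /
        ((1 - x) ^ α) ^ 2) with hr'def
  have hu : HasDerivAt (fun y : ℝ => ((q / p) * (y ^ α / (1 - y) ^ α) + c) / s) (r' / s) x :=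
    (hr.add_const c).div_const s
  set u := ((q / p) * (x ^ α / (1 - x) ^ α) + c) / s with hudef
  have harc : HasDerivAt (fun y : ℝ =>
      Real.arctan (((q / p) * (y ^ α / (1 - y) ^ α) + c) / s))
      ((1 / (1 + u ^ 2)) * (r' / s)) x := by
    exact (Real.hasDerivAt_arctan u).comp x hu
  have hF : HasDerivAt (fun y : ℝ => (1 / (α * π)) * Real.arctan (((q / p) * (y ^ α / (1 - y) ^ α) + c) / s))
      ((1 / (α * π)) * ((1 / (1 + u ^ 2)) * (r' / s))) x := harc.const_mul _
  have hG : HasDerivAt (Gaux α p q)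
      ((1 / (α * π)) * ((1 / (1 + u ^ 2)) * (r' / s))) x := by
    apply hF.congr_of_eventuallyEq
    filter_upwards [Iio_mem_nhds hx1] with y hy
    have hy' : y < 1 := hy
    simp only [Gaux, if_pos hy', hsdef, hcdef]
  convert hG using 1
  -- algebraic identity
  set X := x ^ α with hXdef
  set Y := (1 - x) ^ α with hYdef
  have hXpos : 0 < X := Real.rpow_pos_of_pos hx0 α
  have hYpos : 0 < Y := Real.rpow_pos_of_pos h1x α
  have hX1 : x ^ (α - 1) = X / x := by
    rw [hXdef, Real.rpow_sub hx0, Real.rpow_one]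
  have hY1 : (1 - x) ^ (α - 1) = Y / (1 - x) := by
    rw [hYdef, Real.rpow_sub h1x, Real.rpow_one]
  have hX2 : x ^ (2 * α) = X ^ 2 := by
    rw [hXdef, two_mul, Real.rpow_add hx0, sq]
  have hY2 : (1 - x) ^ (2 * α) = Y ^ 2 := by
    rw [hYdef, two_mul, Real.rpow_add h1x, sq]
  have hsc : s ^ 2 + c ^ 2 = 1 := Real.sin_sq_add_cos_sq (α * π)
  set R := (q / p) * (X / Y) with hRdef
  have hsum : 0 < s ^ 2 + (R + c) ^ 2 := by positivity
  have hstep1 : (1 / (1 + u ^ 2)) * (r' / s) = r' * s / (s ^ 2 + (R + c) ^ 2) := by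
    have h1u : (0:ℝ) < 1 + u ^ 2 := by positivity
    rw [hudef]
    field_simp
  have hden : s ^ 2 + (R + c) ^ 2 = R ^ 2 + 2 * R * c + 1 := by linear_combination hsc
  have hquad : 0 < R ^ 2 + 2 * R * c + 1 := by rw [← hden]; exact hsum
  rw [hstep1, hden, hX1, hY1, hX2, hY2]
  have hD : 0 < q ^ 2 * X ^ 2 + p ^ 2 * Y ^ 2 + 2 * p * q * X * Y * c := by
    have h : q ^ 2 * X ^ 2 + p ^ 2 * Y ^ 2 + 2 * p * q * X * Y * c
        = (p * Y) ^ 2 * (R ^ 2 + 2 * R * c + 1) := by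
      rw [hRdef]; field_simp; ring
    rw [h]; positivity
  have hπ : (π:ℝ) ≠ 0 := Real.pi_ne_zero
  have hr2 : r' = α * q * X / (p * (Y * (x * (1 - x)))) := by
    rw [hr'def, hX1, hY1]
    field_simp
    ring
  have hDR : R ^ 2 + 2 * R * c + 1
      = (q ^ 2 * X ^ 2 + p ^ 2 * Y ^ 2 + 2 * p * q * X * Y * c) / (p ^ 2 * Y ^ 2) := by
    rw [hRdef]
    field_simp
    ring
  rw [hr2, hDR]
  have hD' : (q ^ 2 * X ^ 2 + p ^ 2 * Y ^ 2 + 2 * p * q * X * Y * c) ≠ 0 := hD.ne'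
  field_simp

theorem stmt_8 (α p q : ℝ) (hα0 : 0 < α) (hα1 : α < 1)
    (hp0 : 0 < p) (hp1 : p < 1) (hq : q = 1 - p) :
    ∫ x in Ioo (0:ℝ) 1,
      p * q * Real.sin (α * π) * x ^ (α - 1) * (1 - x) ^ (α - 1) /
        (π * (q ^ 2 * x ^ (2 * α) + p ^ 2 * (1 - x) ^ (2 * α)
          + 2 * p * q * x ^ α * (1 - x) ^ α * Real.cos (α * π))) = 1 := by
  have hq0 : 0 < q := by rw [hq]; linarith
  have hθ0 : 0 < α * π := by positivity
  have hθπ : α * π < π := by nlinarith [Real.pi_pos]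
  have hs : 0 < Real.sin (α * π) := Real.sin_pos_of_pos_of_lt_pi hθ0 hθπ
  have hπ : (0:ℝ) < π := Real.pi_pos
  set f : ℝ → ℝ := fun x =>
      p * q * Real.sin (α * π) * x ^ (α - 1) * (1 - x) ^ (α - 1) /
        (π * (q ^ 2 * x ^ (2 * α) + p ^ 2 * (1 - x) ^ (2 * α)
          + 2 * p * q * x ^ α * (1 - x) ^ α * Real.cos (α * π))) with hf
  have hderiv : ∀ x ∈ Ioo (0:ℝ) 1, HasDerivAt (Gaux α p q) (f x) x :=
    fun x hx => Gaux_deriv α p q hα0 hα1 hp0 hq0 hx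
  have hpos : ∀ x ∈ Ioo (0:ℝ) 1, 0 ≤ f x := by
    intro x hx
    obtain ⟨hx0, hx1⟩ := hx
    have h1x : (0:ℝ) < 1 - x := by linarith
    have hXpos : (0:ℝ) < x ^ α := Real.rpow_pos_of_pos hx0 α
    have hYpos : (0:ℝ) < (1 - x) ^ α := Real.rpow_pos_of_pos h1x α
    have hsc : Real.sin (α*π) ^ 2 + Real.cos (α*π) ^ 2 = 1 := Real.sin_sq_add_cos_sq (α * π)
    have hD : 0 < q ^ 2 * x ^ (2*α) + p ^ 2 * (1-x) ^ (2*α)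
        + 2 * p * q * x ^ α * (1-x) ^ α * Real.cos (α*π) := by
      have hX2 : x ^ (2 * α) = (x ^ α) ^ 2 := by rw [two_mul, Real.rpow_add hx0, sq]
      have hY2 : (1-x) ^ (2 * α) = ((1-x) ^ α) ^ 2 := by rw [two_mul, Real.rpow_add h1x, sq]
      rw [hX2, hY2]
      have h : q ^ 2 * (x ^ α) ^ 2 + p ^ 2 * ((1-x) ^ α) ^ 2
          + 2 * p * q * x ^ α * (1-x) ^ α * Real.cos (α*π)
          = (q * x ^ α + p * (1-x) ^ α * Real.cos (α*π)) ^ 2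
            + (p * (1-x) ^ α) ^ 2 * Real.sin (α*π) ^ 2 := by
        linear_combination (-(p * (1-x)^α)^2) * hsc
      rw [h]; positivity
    have hnum : 0 ≤ p * q * Real.sin (α*π) * x ^ (α-1) * (1-x) ^ (α-1) := by
      have := Real.rpow_pos_of_pos hx0 (α-1)
      have := Real.rpow_pos_of_pos h1x (α-1)
      positivity
    exact div_nonneg hnum (by positivity)
  have hcont : ContinuousOn (Gaux α p q) (Icc (0:ℝ) 1) := by
    intro y hy
    rcases lt_or_eq_of_le hy.2 with hy1 | hy1
    · -- y < 1 : Gaux is continuous at y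
      have h1y : (0:ℝ) < 1 - y := by linarith
      have hC : ContinuousAt (fun z : ℝ =>
          (1 / (α * π)) * Real.arctan (((q / p) * (z ^ α / (1 - z) ^ α) + Real.cos (α * π))
            / Real.sin (α * π))) y := by
        have hXc : ContinuousAt (fun z : ℝ => z ^ α) y :=
          Real.continuousAt_rpow_const y α (Or.inr hα0.le)
        have hYc : ContinuousAt (fun z : ℝ => (1 - z) ^ α) y := by
          have : ContinuousAt (fun z : ℝ => (1:ℝ) - z) y := by fun_prop
          exact (Real.continuousAt_rpow_const (1 - y) α (Or.inr hα0.le)).comp this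
        have hYne : (1 - y) ^ α ≠ 0 := (Real.rpow_pos_of_pos h1y α).ne'
        exact (Real.continuous_arctan.continuousAt.comp
          ((((hXc.div hYc hYne).const_mul _).add continuousAt_const).div_const _)).const_mul _
      have heq : Gaux α p q =ᶠ[nhds y] (fun z : ℝ =>
          (1 / (α * π)) * Real.arctan (((q / p) * (z ^ α / (1 - z) ^ α) + Real.cos (α * π))
            / Real.sin (α * π))) := by
        filter_upwards [Iio_mem_nhds hy1] with z hz
        simp only [Gaux, if_pos (show z < 1 from hz)]
      exact (hC.congr heq.symm).continuousWithinAt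
    · -- y = 1
      subst hy1
      have hb : Tendsto (Gaux α p q) (nhdsWithin 1 (Iio 1)) (nhds ((1 / (α * π)) * (π / 2))) := by
        have hX1 : Tendsto (fun z : ℝ => z ^ α) (nhdsWithin 1 (Iio 1)) (nhds 1) := by
          have := (Real.continuousAt_rpow_const 1 α (Or.inr hα0.le)).tendsto.mono_left
            (nhdsWithin_le_nhds (s := Iio (1:ℝ)))
          simpa [Real.one_rpow] using this
        have hY0 : Tendsto (fun z : ℝ => (1 - z) ^ α) (nhdsWithin 1 (Iio 1))
            (nhdsWithin 0 (Ioi 0)) := by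
          rw [tendsto_nhdsWithin_iff]
          constructor
          · have hc : ContinuousAt (fun z : ℝ => (1 - z) ^ α) 1 := by
              exact (Real.continuousAt_rpow_const (1 - 1) α (Or.inr hα0.le)).comp (by fun_prop)
            have := hc.tendsto.mono_left (nhdsWithin_le_nhds (s := Iio (1:ℝ)))
            simpa [Real.zero_rpow hα0.ne'] using this
          · filter_upwards [self_mem_nhdsWithin] with z hz
            have h1z : (0:ℝ) < 1 - z := by simp only [mem_Iio] at hz; linarith
            exact Real.rpow_pos_of_pos h1z α
        have hinv : Tendsto (fun z : ℝ => ((1 - z) ^ α)⁻¹) (nhdsWithin 1 (Iio 1)) atTop :=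
          tendsto_inv_nhdsGT_zero.comp hY0
        have hmul : Tendsto (fun z : ℝ => z ^ α * ((1 - z) ^ α)⁻¹)
            (nhdsWithin 1 (Iio 1)) atTop := hX1.pos_mul_atTop one_pos hinv
        have hr : Tendsto (fun z : ℝ => (q / p) * (z ^ α / (1 - z) ^ α))
            (nhdsWithin 1 (Iio 1)) atTop := by
          simp only [div_eq_mul_inv]
          exact hmul.const_mul_atTop (by positivity)
        have hu : Tendsto (fun z : ℝ =>
            ((q / p) * (z ^ α / (1 - z) ^ α) + Real.cos (α * π)) / Real.sin (α * π))
            (nhdsWithin 1 (Iio 1)) atTop :=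
          (tendsto_atTop_add_const_right _ _ hr).atTop_div_const hs
        have harct := (Real.tendsto_arctan_atTop.mono_right nhdsWithin_le_nhds).comp hu
        have hb0 := harct.const_mul (1 / (α * π))
        apply hb0.congr'
        filter_upwards [self_mem_nhdsWithin] with z hz
        simp only [Gaux, if_pos (show z < 1 from hz), Function.comp]
      rw [← continuousWithinAt_diff_self]
      have hG1 : Gaux α p q 1 = (1 / (α * π)) * (π / 2) := by
        simp [Gaux]
      unfold ContinuousWithinAt
      rw [hG1]
      exact hb.mono_left (nhdsWithin_mono _ (fun z hz => lt_of_le_of_ne hz.1.2 hz.2))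
  have hIoc : IntegrableOn f (Ioc (0:ℝ) 1) :=
    intervalIntegral.integrableOn_deriv_of_nonneg hcont hderiv hpos
  have hint : IntervalIntegrable f volume 0 1 :=
    (intervalIntegrable_iff_integrableOn_Ioc_of_le (by norm_num)).mpr hIoc
  rw [← integral_Ioc_eq_integral_Ioo,
    ← intervalIntegral.integral_of_le (by norm_num : (0:ℝ) ≤ 1)]
  rw [intervalIntegral.integral_eq_sub_of_hasDerivAt_of_le (by norm_num) hcont hderiv hint]
  have hG1 : Gaux α p q 1 = (1 / (α * π)) * (π / 2) := by simp [Gaux]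
  have hG0 : Gaux α p q 0 = (1 / (α * π)) * (π / 2 - α * π) := by
    have ht : Real.cos (α * π) / Real.sin (α * π) = Real.tan (π / 2 - α * π) := by
      rw [Real.tan_eq_sin_div_cos, Real.sin_pi_div_two_sub, Real.cos_pi_div_two_sub]
    have harct : Real.arctan (Real.cos (α * π) / Real.sin (α * π)) = π / 2 - α * π := by
      rw [ht, Real.arctan_tan (by linarith) (by linarith)]
    simp only [Gaux, if_pos (show (0:ℝ) < 1 by norm_num)]
    rw [Real.zero_rpow hα0.ne', sub_zero, Real.one_rpow]
    norm_num
    rw [harct]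
    tauto
  rw [hG1, hG0]
  field_simp
  ring
end

section
/- For 0 < α < 1, 0 < p < 1, q = 1−p, the cdf of the distribution with density Λ_{α,p}(x) = pq sin(απ) x^{α−1}(1−x)^{α−1} / (π[q²x^{2α} + p²(1−x)^{2α} + 2pq x^α(1−x)^α cos(απ)]) is F(y) = 1 − (1/(πα)) arccot( cot(πα) + (q y^α)/(p(1−y)^α sin(πα)) ) for 0 < y < 1. -/
open Real MeasureTheory Set

set_option maxHeartbeats 1000000 in
theorem stmt_10 (α p q : ℝ) (hα0 : 0 < α) (hα1 : α < 1)
    (hp0 : 0 < p) (hp1 : p < 1) (hq : q = 1 - p)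
    (y : ℝ) (hy0 : 0 < y) (hy1 : y < 1) :
    ∫ x in Ioo (0:ℝ) y,
      p * q * Real.sin (α * π) * x ^ (α - 1) * (1 - x) ^ (α - 1) /
        (π * (q ^ 2 * x ^ (2 * α) + p ^ 2 * (1 - x) ^ (2 * α)
          + 2 * p * q * x ^ α * (1 - x) ^ α * Real.cos (α * π)))
    = 1 - (1 / (π * α)) *
        arccot (Real.cot (π * α) +
          q * y ^ α / (p * (1 - y) ^ α * Real.sin (π * α))) := by
  have hq0 : 0 < q := by rw [hq]; linarith
  have hπ := Real.pi_pos
  set s := Real.sin (π * α) with hs_def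
  set c := Real.cos (π * α) with hc_def
  have hs : 0 < s := by
    apply Real.sin_pos_of_pos_of_lt_pi
    · positivity
    · nlinarith
  have hsc : s ^ 2 + c ^ 2 = 1 := by rw [hs_def, hc_def]; exact Real.sin_sq_add_cos_sq _
  have h1y : 0 < 1 - y := by linarith
  set F : ℝ → ℝ := fun x =>
    1 - (1 / (π * α)) * (π / 2 - Real.arctan (c / s + q * x ^ α / (p * (1 - x) ^ α * s)))
    with hF_def
  set f : ℝ → ℝ := fun x =>
    p * q * Real.sin (α * π) * x ^ (α - 1) * (1 - x) ^ (α - 1) /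
        (π * (q ^ 2 * x ^ (2 * α) + p ^ 2 * (1 - x) ^ (2 * α)
          + 2 * p * q * x ^ α * (1 - x) ^ α * Real.cos (α * π))) with hf_def
  have hsin : Real.sin (α * π) = s := by rw [hs_def, mul_comm]
  have hcos : Real.cos (α * π) = c := by rw [hc_def, mul_comm]
  -- F 0 = 0
  have hcot : c / s = Real.tan (π / 2 - π * α) := by
    rw [Real.tan_pi_div_two_sub, Real.tan_eq_sin_div_cos, inv_div]
  have hF0 : F 0 = 0 := by
    have h0 : (0:ℝ) ^ α = 0 := Real.zero_rpow hα0.ne'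
    simp only [hF_def, h0]
    rw [mul_zero, zero_div, add_zero, hcot, Real.arctan_tan (by nlinarith) (by nlinarith)]
    field_simp
    ring
  -- continuity ingredients
  have hcontX : Continuous fun x : ℝ => x ^ α :=
    continuous_iff_continuousAt.2 fun x => Real.continuousAt_rpow_const x α (Or.inr hα0.le)
  have hcontY : Continuous fun x : ℝ => (1 - x) ^ α :=
    hcontX.comp (continuous_const.sub continuous_id)
  -- continuity of F on [0, y]
  have hcontF : ContinuousOn F (Icc 0 y) := by
    apply ContinuousOn.sub continuousOn_const
    apply ContinuousOn.mul continuousOn_const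
    apply ContinuousOn.sub continuousOn_const
    apply Real.continuous_arctan.comp_continuousOn
    apply ContinuousOn.add continuousOn_const
    apply ContinuousOn.div (continuousOn_const.mul hcontX.continuousOn)
      ((continuousOn_const.mul hcontY.continuousOn).mul continuousOn_const)
    intro x hx
    have h1x : 0 < 1 - x := by rcases hx with ⟨_, hx2⟩; linarith
    have : (0:ℝ) < (1 - x) ^ α := Real.rpow_pos_of_pos h1x α
    exact mul_ne_zero (mul_ne_zero hp0.ne' this.ne') hs.ne'
  -- derivative of F on (0, y)
  have hderiv : ∀ x ∈ Ioo (0:ℝ) y, HasDerivWithinAt F (f x) (Ioi x) x := by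
    intro x hx
    obtain ⟨hx0, hxy⟩ := hx
    have hx1 : x < 1 := by linarith
    have h1x : 0 < 1 - x := by linarith
    have hXp : (0:ℝ) < x ^ α := Real.rpow_pos_of_pos hx0 α
    have hYp : (0:ℝ) < (1 - x) ^ α := Real.rpow_pos_of_pos h1x α
    have hX1p : (0:ℝ) < x ^ (α - 1) := Real.rpow_pos_of_pos hx0 _
    have hY1p : (0:ℝ) < (1 - x) ^ (α - 1) := Real.rpow_pos_of_pos h1x _
    have hden_ne : p * (1 - x) ^ α * s ≠ 0 := by positivity
    have hB : HasDerivAt (fun t : ℝ => q * t ^ α) (q * (α * x ^ (α - 1))) x :=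
      ((Real.hasDerivAt_rpow_const (p := α) (Or.inl hx0.ne'))).const_mul q
    have hA : HasDerivAt (fun t : ℝ => p * (1 - t) ^ α * s)
        ((p * (-1 * α * (1 - x) ^ (α - 1))) * s) x :=
      ((((hasDerivAt_id x).const_sub 1).rpow_const (Or.inl h1x.ne')).const_mul p).mul_const s
    have hg := (hB.div hA hden_ne).const_add (c / s)
    have hF' := ((hg.arctan.const_sub (π / 2)).const_mul (1 / (π * α))).const_sub 1
    refine HasDerivAt.hasDerivWithinAt ?_
    convert hF' using 1
    · rfl
    -- algebraic identity between the two derivative expressions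
    have hX2 : x ^ (2 * α) = x ^ α * x ^ α := by rw [two_mul, Real.rpow_add hx0]
    have hY2 : (1 - x) ^ (2 * α) = (1 - x) ^ α * (1 - x) ^ α := by
      rw [two_mul, Real.rpow_add h1x]
    have hXX : x ^ α = x ^ (α - 1) * x := by
      rw [← Real.rpow_add_one hx0.ne' (α - 1), sub_add_cancel]
    have hYY : (1 - x) ^ α = (1 - x) ^ (α - 1) * (1 - x) := by
      rw [← Real.rpow_add_one h1x.ne' (α - 1), sub_add_cancel]
    have hDpos : 0 < q ^ 2 * x ^ (2 * α) + p ^ 2 * (1 - x) ^ (2 * α)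
        + 2 * p * q * x ^ α * (1 - x) ^ α * c := by
      have hDeq : q ^ 2 * x ^ (2 * α) + p ^ 2 * (1 - x) ^ (2 * α)
          + 2 * p * q * x ^ α * (1 - x) ^ α * c
          = (p * (1 - x) ^ α * s) ^ 2 + (p * (1 - x) ^ α * c + q * x ^ α) ^ 2 := by
        rw [hX2, hY2]; linear_combination (-(p * (1 - x) ^ α) ^ 2) * hsc
      rw [hDeq]
      have h1 : 0 < p * (1 - x) ^ α * s := by positivity
      positivity
    have e1 : 1 + (c / s + q * x ^ α / (p * (1 - x) ^ α * s)) ^ 2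
        = (q ^ 2 * x ^ (2 * α) + p ^ 2 * (1 - x) ^ (2 * α)
            + 2 * p * q * x ^ α * (1 - x) ^ α * c) / (p * (1 - x) ^ α * s) ^ 2 := by
      rw [hX2, hY2]
      field_simp
      linear_combination (p ^ 2 * ((1 - x) ^ α) ^ 2) * hsc
    simp only [hf_def, hsin, hcos, Pi.div_apply]
    rw [e1]
    rw [div_div_eq_mul_div, one_div, mul_comm]
    field_simp
    rw [hXX, hYY]
    ring
  -- integrability
  have hint : IntervalIntegrable f volume 0 y := by
    rw [intervalIntegrable_iff_integrableOn_Ioo_of_le hy0.le]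
    set C : ℝ := p * q * s * (1 - y) ^ (α - 1) / (π * (p ^ 2 * (1 - y) ^ (2 * α) * s ^ 2))
      with hC_def
    have hCg : IntegrableOn (fun x : ℝ => C * x ^ (α - 1)) (Ioo 0 y) := by
      have := (intervalIntegral.intervalIntegrable_rpow' (a := 0) (b := y)
        (r := α - 1) (by linarith)).const_mul C
      rwa [intervalIntegrable_iff_integrableOn_Ioo_of_le hy0.le] at this
    have hcontX2 : Continuous fun x : ℝ => x ^ (2 * α) :=
      continuous_iff_continuousAt.2 fun x =>
        Real.continuousAt_rpow_const x (2 * α) (Or.inr (by positivity))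
    have hcontY2 : Continuous fun x : ℝ => (1 - x) ^ (2 * α) :=
      hcontX2.comp (continuous_const.sub continuous_id)
    have hfcont : ContinuousOn (fun x : ℝ =>
        p * q * Real.sin (α * π) * x ^ (α - 1) * (1 - x) ^ (α - 1) /
        (π * (q ^ 2 * x ^ (2 * α) + p ^ 2 * (1 - x) ^ (2 * α)
          + 2 * p * q * x ^ α * (1 - x) ^ α * Real.cos (α * π)))) (Ioo 0 y) := by
      apply ContinuousOn.div
      · exact ((continuousOn_const.mul
            (continuousOn_id.rpow_const fun x hx => Or.inl (ne_of_gt hx.1))).mul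
          ((continuousOn_const.sub continuousOn_id).rpow_const
            fun x hx => Or.inl (by rcases hx with ⟨_, h2⟩; intro h; simp only [Pi.sub_apply, id_eq] at h; nlinarith)))
      · exact continuousOn_const.mul
          (((continuousOn_const.mul hcontX2.continuousOn).add
            (continuousOn_const.mul hcontY2.continuousOn)).add
            (((continuousOn_const.mul hcontX.continuousOn).mul hcontY.continuousOn).mul
              continuousOn_const))
      · intro x hx
        obtain ⟨hx0, hxy⟩ := hx
        have h1x : 0 < 1 - x := by linarith
        have hXp : (0:ℝ) < x ^ α := Real.rpow_pos_of_pos hx0 α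
        have hYp : (0:ℝ) < (1 - x) ^ α := Real.rpow_pos_of_pos h1x α
        have hX2 : x ^ (2 * α) = x ^ α * x ^ α := by rw [two_mul, Real.rpow_add hx0]
        have hY2 : (1 - x) ^ (2 * α) = (1 - x) ^ α * (1 - x) ^ α := by
          rw [two_mul, Real.rpow_add h1x]
        have hDeq : q ^ 2 * x ^ (2 * α) + p ^ 2 * (1 - x) ^ (2 * α)
            + 2 * p * q * x ^ α * (1 - x) ^ α * Real.cos (α * π)
            = (p * (1 - x) ^ α * s) ^ 2 + (p * (1 - x) ^ α * c + q * x ^ α) ^ 2 := by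
          rw [hX2, hY2, hcos]; linear_combination (-(p * (1 - x) ^ α) ^ 2) * hsc
        rw [hDeq]
        have h1 : 0 < p * (1 - x) ^ α * s := by positivity
        positivity
    apply Integrable.mono' hCg
    · -- measurability
      rw [hf_def]
      exact hfcont.aestronglyMeasurable measurableSet_Ioo
    · -- bound
      filter_upwards [ae_restrict_mem measurableSet_Ioo] with x hx
      obtain ⟨hx0, hxy⟩ := hx
      have h1x : 0 < 1 - x := by linarith
      have h1xy : 1 - y ≤ 1 - x := by linarith
      have hXp : (0:ℝ) < x ^ α := Real.rpow_pos_of_pos hx0 α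
      have hYp : (0:ℝ) < (1 - x) ^ α := Real.rpow_pos_of_pos h1x α
      have hX1p : (0:ℝ) < x ^ (α - 1) := Real.rpow_pos_of_pos hx0 _
      have hY1p : (0:ℝ) < (1 - x) ^ (α - 1) := Real.rpow_pos_of_pos h1x _
      have hX2 : x ^ (2 * α) = x ^ α * x ^ α := by rw [two_mul, Real.rpow_add hx0]
      have hY2 : (1 - x) ^ (2 * α) = (1 - x) ^ α * (1 - x) ^ α := by
        rw [two_mul, Real.rpow_add h1x]
      have hY2' : (1 - y) ^ (2 * α) = (1 - y) ^ α * (1 - y) ^ α := by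
        rw [two_mul, Real.rpow_add h1y]
      have hDeq : q ^ 2 * x ^ (2 * α) + p ^ 2 * (1 - x) ^ (2 * α)
          + 2 * p * q * x ^ α * (1 - x) ^ α * c
          = (p * (1 - x) ^ α * s) ^ 2 + (p * (1 - x) ^ α * c + q * x ^ α) ^ 2 := by
        rw [hX2, hY2]; linear_combination (-(p * (1 - x) ^ α) ^ 2) * hsc
      have hDpos : 0 < q ^ 2 * x ^ (2 * α) + p ^ 2 * (1 - x) ^ (2 * α)
          + 2 * p * q * x ^ α * (1 - x) ^ α * c := by
        rw [hDeq]
        have h1 : 0 < p * (1 - x) ^ α * s := by positivity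
        positivity
      have hfnn : 0 ≤ f x := by
        simp only [hf_def, hsin, hcos]
        positivity
      rw [Real.norm_of_nonneg hfnn]
      simp only [hf_def, hsin, hcos]
      have hnum : p * q * s * x ^ (α - 1) * (1 - x) ^ (α - 1)
          ≤ p * q * s * x ^ (α - 1) * (1 - y) ^ (α - 1) := by
        have h2 : (1 - x) ^ (α - 1) ≤ (1 - y) ^ (α - 1) :=
          Real.rpow_le_rpow_of_nonpos h1y h1xy (by linarith)
        have hpos : 0 ≤ p * q * s * x ^ (α - 1) := by positivity
        nlinarith
      have hden : π * (p ^ 2 * (1 - y) ^ (2 * α) * s ^ 2)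
          ≤ π * (q ^ 2 * x ^ (2 * α) + p ^ 2 * (1 - x) ^ (2 * α)
            + 2 * p * q * x ^ α * (1 - x) ^ α * c) := by
        apply mul_le_mul_of_nonneg_left _ hπ.le
        have hYY : (1 - y) ^ α ≤ (1 - x) ^ α :=
          Real.rpow_le_rpow h1y.le h1xy hα0.le
        have hYyp : (0:ℝ) < (1 - y) ^ α := Real.rpow_pos_of_pos h1y α
        rw [hDeq, hY2']
        have hmul : (1 - y) ^ α * (1 - y) ^ α ≤ (1 - x) ^ α * (1 - x) ^ α :=
          mul_le_mul hYY hYY hYyp.le hYp.le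
        nlinarith [sq_nonneg (p * (1 - x) ^ α * c + q * x ^ α), sq_nonneg (p * s),
          mul_le_mul_of_nonneg_left hmul (by positivity : (0:ℝ) ≤ p ^ 2 * s ^ 2)]
      have hdenpos : 0 < π * (p ^ 2 * (1 - y) ^ (2 * α) * s ^ 2) := by
        have : (0:ℝ) < (1 - y) ^ (2 * α) := Real.rpow_pos_of_pos h1y _
        positivity
      calc p * q * s * x ^ (α - 1) * (1 - x) ^ (α - 1) /
            (π * (q ^ 2 * x ^ (2 * α) + p ^ 2 * (1 - x) ^ (2 * α)
              + 2 * p * q * x ^ α * (1 - x) ^ α * c))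
          ≤ p * q * s * x ^ (α - 1) * (1 - y) ^ (α - 1) /
            (π * (p ^ 2 * (1 - y) ^ (2 * α) * s ^ 2)) :=
            div_le_div₀ (by positivity) hnum hdenpos hden
        _ = C * x ^ (α - 1) := by rw [hC_def]; field_simp
  -- put it together
  have hFTC := intervalIntegral.integral_eq_sub_of_hasDeriv_right_of_le hy0.le hcontF hderiv hint
  rw [intervalIntegral.integral_of_le hy0.le, MeasureTheory.integral_Ioc_eq_integral_Ioo] at hFTC
  calc (∫ x in Ioo (0:ℝ) y, f x) = F y - F 0 := hFTC
    _ = F y := by rw [hF0, sub_zero]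
    _ = 1 - (1 / (π * α)) * arccot (Real.cot (π * α)
          + q * y ^ α / (p * (1 - y) ^ α * s)) := by
        simp only [hF_def, arccot, Real.cot_eq_cos_div_sin]
        rw [← hc_def, ← hs_def]
end
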